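/- Let ε ∈ (0,1/4], k ≥ 1, let W be a channel from [2k] to a finite alphabet 𝒴, let z ∈ {−1,+1}^k, let i ∈ {1,…,k}, and let z^{⊕i} denote z with its i-th coordinate flipped. Writing W∘p for the output distribution y ↦ Σ_{x∈[2k]} p(x) W(y|x), one has χ²( W∘p_z ‖ W∘p_{z^{⊕i}} ) ≤ (16 ε² / k) · H(W)_{i,i}, and consequently the KL divergence in nats satisfies KL( W∘p_z ‖ W∘p_{z^{⊕i}} ) ≤ (16 ε² / k) · H(W)_{i,i}. -/

import Mathlib

open Finset

namespace Paper

/-- A probability distribution on a finite type, given by its mass function. -/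
def IsDist {α : Type*} [Fintype α] (p : α → ℝ) : Prop :=
  (∀ a, 0 ≤ p a) ∧ ∑ a, p a = 1

/-- A channel (row-stochastic kernel) from `α` to the finite alphabet `𝒴`. -/
def IsChannel {α 𝒴 : Type*} [Fintype α] [Fintype 𝒴] (W : α → 𝒴 → ℝ) : Prop :=
  ∀ x, IsDist (W x)

/-- Total variation distance between mass functions on a finite type. -/
noncomputable def tvDist {α : Type*} [Fintype α] (p q : α → ℝ) : ℝ :=
  (∑ a, |p a - q a|) / 2

/-- The element `2i-1` (1-indexed) of `[2k]`, i.e. index `2i` in 0-indexed terms. -/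
def lo {k : ℕ} (i : Fin k) : Fin (2 * k) := ⟨2 * i.val, by have := i.isLt; omega⟩

/-- The element `2i` (1-indexed) of `[2k]`, i.e. index `2i+1` in 0-indexed terms. -/
def hi {k : ℕ} (i : Fin k) : Fin (2 * k) := ⟨2 * i.val + 1, by have := i.isLt; omega⟩

/-- The channel information matrix `H(W)`  (division by `0` yields `0` in Lean,
matching the convention that terms with zero denominator vanish). -/
noncomputable def HMat (k : ℕ) {𝒴 : Type*} [Fintype 𝒴] (W : Fin (2 * k) → 𝒴 → ℝ) :
    Matrix (Fin k) (Fin k) ℝ := fun i j =>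
  ∑ y, (W (lo i) y - W (hi i) y) * (W (lo j) y - W (hi j) y) / (∑ x, W x y)

/-- Nuclear norm of a real symmetric matrix (sum of absolute values of eigenvalues). -/
noncomputable def nucNorm {k : ℕ} (A : Matrix (Fin k) (Fin k) ℝ) : ℝ :=
  if h : A.IsHermitian then ∑ i, |h.eigenvalues i| else 0

/-- Operator (spectral) norm of a real symmetric matrix. -/
noncomputable def opNorm {k : ℕ} (A : Matrix (Fin k) (Fin k) ℝ) : ℝ :=
  if h : A.IsHermitian then ⨆ i, |h.eigenvalues i| else 0

/-- Frobenius norm of a matrix. -/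
noncomputable def frobNorm {k : ℕ} (A : Matrix (Fin k) (Fin k) ℝ) : ℝ :=
  Real.sqrt (∑ i, ∑ j, (A i j) ^ 2)

/-- `‖𝒲‖_*`, the maximal nuclear norm of `H(W)` over the family. -/
noncomputable def famNuc (k : ℕ) {𝒴 : Type*} [Fintype 𝒴]
    (𝒲 : Set (Fin (2 * k) → 𝒴 → ℝ)) : ℝ :=
  sSup ((fun W => nucNorm (HMat k W)) '' 𝒲)

/-- `‖𝒲‖_op`, the maximal operator norm of `H(W)` over the family. -/
noncomputable def famOp (k : ℕ) {𝒴 : Type*} [Fintype 𝒴]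
    (𝒲 : Set (Fin (2 * k) → 𝒴 → ℝ)) : ℝ :=
  sSup ((fun W => opNorm (HMat k W)) '' 𝒲)

/-- `‖𝒲‖_F`, the maximal Frobenius norm of `H(W)` over the family. -/
noncomputable def famFrob (k : ℕ) {𝒴 : Type*} [Fintype 𝒴]
    (𝒲 : Set (Fin (2 * k) → 𝒴 → ℝ)) : ℝ :=
  sSup ((fun W => frobNorm (HMat k W)) '' 𝒲)

/-- A deterministic sequentially interactive protocol over `n` users: to each user `t`
and each message prefix it assigns a channel. -/
def Protocol (k n : ℕ) (𝒴 : Type*) : Type _ :=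
  (t : Fin n) → (Fin t.val → 𝒴) → Fin (2 * k) → 𝒴 → ℝ

/-- All channels used by the protocol belong to the family `𝒲`. -/
def UsesFamily {k n : ℕ} {𝒴 : Type*} (π : Protocol k n 𝒴)
    (𝒲 : Set (Fin (2 * k) → 𝒴 → ℝ)) : Prop :=
  ∀ t pre, π t pre ∈ 𝒲

/-- All kernels used by the protocol are genuine channels. -/
def ChannelProtocol {k n : ℕ} {𝒴 : Type*} [Fintype 𝒴] (π : Protocol k n 𝒴) : Prop :=
  ∀ t pre, IsChannel (π t pre)

/-- Distribution of the first `t` messages of the transcript when the inputs are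
i.i.d. with law `p`. -/
noncomputable def prefixDist {k n : ℕ} {𝒴 : Type*} [Fintype 𝒴] (π : Protocol k n 𝒴)
    (p : Fin (2 * k) → ℝ) (t : ℕ) (ht : t ≤ n) (y : Fin t → 𝒴) : ℝ :=
  ∏ s : Fin t, ∑ x, p x *
    π ⟨s.val, lt_of_lt_of_le s.isLt ht⟩ (fun r => y ⟨r.val, lt_trans r.isLt s.isLt⟩) x (y s)

/-- Distribution of the full transcript `Y^n` when the inputs are i.i.d. with law `p`. -/
noncomputable def transDist {k n : ℕ} {𝒴 : Type*} [Fintype 𝒴] (π : Protocol k n 𝒴)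
    (p : Fin (2 * k) → ℝ) (y : Fin n → 𝒴) : ℝ :=
  prefixDist π p n le_rfl y

/-- The uniform distribution on `[2k]`. -/
noncomputable def uniform2k (k : ℕ) : Fin (2 * k) → ℝ := fun _ => (2 * (k : ℝ))⁻¹

/-- An `(n, ε)`-estimator using `𝒲`: a public-coin sequentially interactive protocol
(seed distribution `μ`, protocols `π u`, channels from `𝒲`) together with an estimator
`est` such that, for every input distribution `p`, the probability that the estimate is
more than `ε` away from `p` in total variation is at most `1/100`. -/
def IsEstimator {k n : ℕ} {𝒴 𝒰 : Type*} [Fintype 𝒴] [Fintype 𝒰]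
    (𝒲 : Set (Fin (2 * k) → 𝒴 → ℝ)) (μ : 𝒰 → ℝ) (π : 𝒰 → Protocol k n 𝒴)
    (est : (Fin n → 𝒴) → 𝒰 → Fin (2 * k) → ℝ) (ε : ℝ) : Prop :=
  IsDist μ ∧ (∀ u, UsesFamily (π u) 𝒲) ∧ (∀ u, ChannelProtocol (π u)) ∧
  (∀ y u, IsDist (est y u)) ∧
  ∀ p : Fin (2 * k) → ℝ, IsDist p →
    (∑ u, ∑ y : Fin n → 𝒴, μ u * (transDist (π u) p y *
      (if ε < tvDist (est y u) p then (1 : ℝ) else 0))) ≤ 1 / 100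

/-- An `(n, ε)`-uniformity test using `𝒲`: a public-coin sequentially interactive
protocol together with a randomized decision rule `T` (probability of output `1`)
accepting uniform and rejecting `ε`-far distributions with probability `99/100`. -/
def IsUnifTest {k n : ℕ} {𝒴 𝒰 : Type*} [Fintype 𝒴] [Fintype 𝒰]
    (𝒲 : Set (Fin (2 * k) → 𝒴 → ℝ)) (μ : 𝒰 → ℝ) (π : 𝒰 → Protocol k n 𝒴)
    (T : (Fin n → 𝒴) → 𝒰 → ℝ) (ε : ℝ) : Prop :=
  IsDist μ ∧ (∀ u, UsesFamily (π u) 𝒲) ∧ (∀ u, ChannelProtocol (π u)) ∧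
  (∀ y u, T y u ∈ Set.Icc (0 : ℝ) 1) ∧
  (99 / 100 ≤ ∑ u, ∑ y : Fin n → 𝒴, μ u * (transDist (π u) (uniform2k k) y * (1 - T y u))) ∧
  ∀ p : Fin (2 * k) → ℝ, IsDist p → ε ≤ tvDist p (uniform2k k) →
    99 / 100 ≤ ∑ u, ∑ y : Fin n → 𝒴, μ u * (transDist (π u) p y * T y u)

/-- Mutual information (in nats) of a joint mass function on `A × B`. -/
noncomputable def miNats {A B : Type*} [Fintype A] [Fintype B] (j : A → B → ℝ) : ℝ :=
  ∑ a, ∑ b, j a b * Real.log (j a b / ((∑ b', j a b') * (∑ a', j a' b)))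

/-- Mutual information (in bits) of a joint mass function on `A × B`. -/
noncomputable def miBits {A B : Type*} [Fintype A] [Fintype B] (j : A → B → ℝ) : ℝ :=
  ∑ a, ∑ b, j a b * Real.logb 2 (j a b / ((∑ b', j a b') * (∑ a', j a' b)))

/-- Binary entropy function (in bits). -/
noncomputable def binEnt (t : ℝ) : ℝ :=
  -(t * Real.logb 2 t) - (1 - t) * Real.logb 2 (1 - t)

/-- `±1` encoding of a Boolean. -/
def pm (b : Bool) : ℝ := if b then 1 else -1

/-- The joint mass function of `(Z_i, Y)` obtained from a joint mass function of `(Z, Y)`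
for `Z ∈ {−1,+1}^k` (encoded via Booleans). -/
noncomputable def coordJoint {k : ℕ} {𝒴 : Type*} [Fintype 𝒴]
    (j : (Fin k → Bool) → 𝒴 → ℝ) (i : Fin k) : Bool → 𝒴 → ℝ :=
  fun b y => ∑ z : Fin k → Bool, if z i = b then j z y else 0

/-- The Paninski perturbation `p_z` of the uniform distribution on `[2k]`:
`p_z(2i−1) = (1+2ε z_i)/(2k)` and `p_z(2i) = (1−2ε z_i)/(2k)` (1-indexed). -/
noncomputable def paninski (k : ℕ) (ε : ℝ) (z : Fin k → Bool) : Fin (2 * k) → ℝ :=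
  fun x => (1 + (if x.val % 2 = 0 then (1 : ℝ) else -1) * (2 * ε) *
    pm (z ⟨x.val / 2, by have := x.isLt; omega⟩)) / (2 * k)

/-- Chi-square divergence between mass functions on a finite type. -/
noncomputable def chiSq {α : Type*} [Fintype α] (P Q : α → ℝ) : ℝ :=
  ∑ y, (P y - Q y) ^ 2 / Q y

/-- Kullback–Leibler divergence (in nats) between mass functions on a finite type. -/
noncomputable def klDivNats {α : Type*} [Fintype α] (P Q : α → ℝ) : ℝ :=
  ∑ y, P y * Real.log (P y / Q y)

/-- The leaky-query channel `W_u^η` on output alphabet `[2k] ∪ {1*, 0*}`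
(`Sum.inr true = 1*`, `Sum.inr false = 0*`). -/
noncomputable def leaky (k : ℕ) (η : ℝ) (u : Fin (2 * k) → ℝ) :
    Fin (2 * k) → (Fin (2 * k) ⊕ Bool) → ℝ :=
  fun x y => Sum.elim (fun x' => if x' = x then η else 0)
    (fun b => if b then (1 - η) * u x else (1 - η) * (1 - u x)) y

/-- The vector `δ(u)` associated with a leaky-query channel. -/
noncomputable def leakyDelta (k : ℕ) (u : Fin (2 * k) → ℝ) : Fin k → ℝ :=
  fun i => (u (lo i) - u (hi i)) *
    Real.sqrt ((2 * (k : ℝ)) / ((∑ x, u x) * (2 * (k : ℝ) - ∑ x, u x)))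

/-- The partial-erasure channel `W_{x*}` on output alphabet `[2k] ∪ {⊥}`. -/
noncomputable def eraseCh (k : ℕ) (η : ℝ) (xs : Fin (2 * k)) :
    Fin (2 * k) → (Fin (2 * k) ⊕ Unit) → ℝ :=
  fun x y => Sum.elim (fun x' => if x' = x then (if x = xs then 1 else η) else 0)
    (fun _ => if x = xs then 0 else 1 - η) y

/-- The family of all `ρ`-locally differentially private channels from `[2k]` to `𝒴`. -/
def ldpFamily (k : ℕ) {𝒴 : Type*} [Fintype 𝒴] (ρ : ℝ) :
    Set (Fin (2 * k) → 𝒴 → ℝ) :=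
  { W | IsChannel W ∧ ∀ x x' y, W x y ≤ Real.exp ρ * W x' y }


section Aux

private def pairEquiv (k : ℕ) : Fin k × Bool ≃ Fin (2 * k) where
  toFun p := ⟨2 * p.1.val + (if p.2 then 1 else 0), by have := p.1.isLt; cases p.2 <;> simp <;> omega⟩
  invFun x := (⟨x.val / 2, by have := x.isLt; omega⟩, decide (x.val % 2 = 1))
  left_inv p := by
    obtain ⟨i, b⟩ := p
    cases b <;> simp [Prod.ext_iff, Fin.ext_iff] <;> omega
  right_inv x := by
    simp [Prod.ext_iff, Fin.ext_iff]
    rcases Nat.even_or_odd x.val with h | h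
    · have : x.val % 2 = 0 := Nat.even_iff.mp h
      simp [this]; omega
    · have : x.val % 2 = 1 := Nat.odd_iff.mp h
      simp [this]; omega

private lemma pairSum {k : ℕ} (f : Fin (2 * k) → ℝ) :
    ∑ x, f x = ∑ i : Fin k, (f (lo i) + f (hi i)) := by
  rw [← Fintype.sum_equiv (pairEquiv k) (fun p => f (pairEquiv k p)) f (fun p => rfl)]
  rw [Fintype.sum_prod_type]
  refine Finset.sum_congr rfl fun i _ => ?_
  rw [Fintype.sum_bool]
  simp only [pairEquiv, lo, hi, Equiv.coe_fn_mk, ite_true, ite_false]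
  rw [add_comm]; rfl

private lemma pm_mul_self (b : Bool) : pm b * pm b = 1 := by cases b <;> simp [pm]

private lemma pm_not (b : Bool) : pm (!b) = -pm b := by cases b <;> simp [pm]

private lemma paninski_lo {k : ℕ} (ε : ℝ) (z : Fin k → Bool) (i : Fin k) :
    paninski k ε z (lo i) = (1 + 2 * ε * pm (z i)) / (2 * k) := by
  have h2 : 2 * i.val / 2 = i.val := by omega
  have h3 : (⟨2 * i.val / 2, by have := i.isLt; omega⟩ : Fin k) = i := Fin.ext h2
  simp [paninski, lo, h3]

private lemma paninski_hi {k : ℕ} (ε : ℝ) (z : Fin k → Bool) (i : Fin k) :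
    paninski k ε z (hi i) = (1 - 2 * ε * pm (z i)) / (2 * k) := by
  have h1 : (2 * i.val + 1) % 2 = 1 := by omega
  have h2 : (2 * i.val + 1) / 2 = i.val := by omega
  have h3 : (⟨(2 * i.val + 1) / 2, by have := i.isLt; omega⟩ : Fin k) = i := Fin.ext h2
  simp [paninski, hi, h1, h3]
  ring

private lemma paninski_update_eq {k : ℕ} (ε : ℝ) (z : Fin k → Bool) (i : Fin k) (b : Bool)
    (x : Fin (2 * k)) (hx1 : x ≠ lo i) (hx2 : x ≠ hi i) :
    paninski k ε (Function.update z i b) x = paninski k ε z x := by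
  have hj : (⟨x.val / 2, by have := x.isLt; omega⟩ : Fin k) ≠ i := by
    intro h
    have hv : x.val / 2 = i.val := congrArg Fin.val h
    have := x.isLt
    have hx1' : x.val ≠ 2 * i.val := fun he => hx1 (Fin.ext he)
    have hx2' : x.val ≠ 2 * i.val + 1 := fun he => hx2 (Fin.ext he)
    omega
  simp [paninski, Function.update_of_ne hj]

private lemma paninski_lb {k : ℕ} (hk : 1 ≤ k) {ε : ℝ} (hε : 0 < ε) (hε' : ε ≤ 1 / 4)
    (z : Fin k → Bool) (x : Fin (2 * k)) :
    1 / (4 * (k : ℝ)) ≤ paninski k ε z x := by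
  have hk0 : (0 : ℝ) < k := by exact_mod_cast hk
  have hnum : 1 / 2 ≤ 1 + (if x.val % 2 = 0 then (1 : ℝ) else -1) * (2 * ε) *
      pm (z ⟨x.val / 2, by have := x.isLt; omega⟩) := by
    by_cases h : x.val % 2 = 0 <;>
      cases hb : z ⟨x.val / 2, by have := x.isLt; omega⟩ <;>
        simp [pm, h, hb] <;> nlinarith
  calc 1 / (4 * (k : ℝ)) = (1 / 2) / (2 * k) := by ring
    _ ≤ _ := by rw [paninski]; gcongr

private lemma paninski_nonneg {k : ℕ} (hk : 1 ≤ k) {ε : ℝ} (hε : 0 < ε) (hε' : ε ≤ 1 / 4)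
    (z : Fin k → Bool) (x : Fin (2 * k)) : 0 ≤ paninski k ε z x := by
  have hk0 : (0 : ℝ) < k := by exact_mod_cast hk
  exact le_trans (by positivity) (paninski_lb hk hε hε' z x)

private lemma paninski_sum {k : ℕ} (hk : 1 ≤ k) (ε : ℝ) (z : Fin k → Bool) :
    ∑ x, paninski k ε z x = 1 := by
  have hk0 : (0 : ℝ) < k := by exact_mod_cast hk
  rw [pairSum (paninski k ε z)]
  have : ∀ i : Fin k, paninski k ε z (lo i) + paninski k ε z (hi i) = 1 / k := by
    intro i
    rw [paninski_lo, paninski_hi, ← add_div]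
    rw [div_eq_div_iff (by positivity) (by positivity)]
    ring
  rw [Finset.sum_congr rfl fun i _ => this i]
  simp [Finset.card_univ]
  field_simp

private lemma kl_le_chiSq {α : Type*} [Fintype α] (P Q : α → ℝ)
    (hP : ∀ a, 0 ≤ P a) (hQ : ∀ a, 0 ≤ Q a) (hPQ : ∀ a, Q a = 0 → P a = 0)
    (hsP : ∑ a, P a = 1) (hsQ : ∑ a, Q a = 1) :
    klDivNats P Q ≤ chiSq P Q := by
  have key : ∀ a, P a * Real.log (P a / Q a) ≤ (P a - Q a) ^ 2 / Q a + (P a - Q a) := by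
    intro a
    rcases eq_or_lt_of_le (hP a) with h0 | hp
    · rw [← h0, zero_mul]
      rcases eq_or_ne (Q a) 0 with hq | hq
      · simp [hq]
      · have heq : ((0 : ℝ) - Q a) ^ 2 / Q a + (0 - Q a) = 0 := by field_simp; ring
        rw [heq]
    · have hq : 0 < Q a := by
        rcases eq_or_lt_of_le (hQ a) with h | h
        · exact absurd (hPQ a h.symm) (by linarith)
        · exact h
      have hlog : Real.log (P a / Q a) ≤ P a / Q a - 1 :=
        Real.log_le_sub_one_of_pos (div_pos hp hq)
      have h1 : P a * Real.log (P a / Q a) ≤ P a * (P a / Q a - 1) :=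
        mul_le_mul_of_nonneg_left hlog (hP a)
      have h2 : P a * (P a / Q a - 1) = (P a - Q a) ^ 2 / Q a + (P a - Q a) := by
        field_simp
        ring
      rw [← h2]
      exact h1
  calc klDivNats P Q ≤ ∑ a, ((P a - Q a) ^ 2 / Q a + (P a - Q a)) :=
        Finset.sum_le_sum fun a _ => key a
    _ = chiSq P Q + (∑ a, P a - ∑ a, Q a) := by
        rw [Finset.sum_add_distrib, Finset.sum_sub_distrib, chiSq]
    _ = chiSq P Q := by rw [hsP, hsQ]; ring

end Aux

/-- For a channel `W`, a sign vector `z`, and a coordinate `i`,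
with `z^{⊕i}` denoting `z` with the `i`-th coordinate flipped,
`χ²(W∘p_z ‖ W∘p_{z^{⊕i}}) ≤ (16ε²/k) H(W)_{i,i}` and the same bound holds for the
KL divergence (in nats). -/
theorem chisq_kl_flip_bound
    (k : ℕ) (hk : 1 ≤ k) (ε : ℝ) (hε : 0 < ε) (hε' : ε ≤ 1 / 4)
    (𝒴 : Type) [Fintype 𝒴]
    (W : Fin (2 * k) → 𝒴 → ℝ) (hW : IsChannel W)
    (z : Fin k → Bool) (i : Fin k) :
    chiSq (fun y => ∑ x, paninski k ε z x * W x y)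
        (fun y => ∑ x, paninski k ε (Function.update z i (!(z i))) x * W x y)
      ≤ 16 * ε ^ 2 / (k : ℝ) * HMat k W i i ∧
    klDivNats (fun y => ∑ x, paninski k ε z x * W x y)
        (fun y => ∑ x, paninski k ε (Function.update z i (!(z i))) x * W x y)
      ≤ 16 * ε ^ 2 / (k : ℝ) * HMat k W i i := by
  classical
  have hk0 : (0 : ℝ) < k := by exact_mod_cast hk
  set z' := Function.update z i (!(z i)) with hz'
  set P : 𝒴 → ℝ := fun y => ∑ x, paninski k ε z x * W x y with hPdef
  set Q : 𝒴 → ℝ := fun y => ∑ x, paninski k ε z' x * W x y with hQdef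
  have hWnn : ∀ x y, 0 ≤ W x y := fun x y => (hW x).1 y
  have hSnn : ∀ y : 𝒴, 0 ≤ ∑ x, W x y := fun y => Finset.sum_nonneg fun x _ => hWnn x y
  have hSzero : ∀ y : 𝒴, (∑ x, W x y) = 0 → ∀ x, W x y = 0 := by
    intro y h x
    exact (Finset.sum_eq_zero_iff_of_nonneg fun x _ => hWnn x y).mp h x (Finset.mem_univ x)
  have hQge : ∀ y, (∑ x, W x y) / (4 * k) ≤ Q y := by
    intro y
    have : (∑ x, W x y) / (4 * k) = ∑ x, 1 / (4 * (k : ℝ)) * W x y := by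
      rw [← Finset.mul_sum]; ring
    rw [this]
    exact Finset.sum_le_sum fun x _ =>
      mul_le_mul_of_nonneg_right (paninski_lb hk hε hε' z' x) (hWnn x y)
  have hPnn : ∀ y, 0 ≤ P y := fun y =>
    Finset.sum_nonneg fun x _ => mul_nonneg (paninski_nonneg hk hε hε' z x) (hWnn x y)
  have hQzeroP : ∀ y, Q y = 0 → P y = 0 := by
    intro y hQ0
    have hS0 : (∑ x, W x y) = 0 := by
      have h1 := hQge y
      rw [hQ0] at h1
      have h2 : (∑ x, W x y) / (4 * k) ≥ 0 := div_nonneg (hSnn y) (by positivity)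
      have : (∑ x, W x y) / (4 * k) = 0 := le_antisymm h1 h2
      have h4 : (0:ℝ) < 4 * k := by positivity
      field_simp at this
      simpa using this
    simp [hPdef, fun x => hSzero y hS0 x]
  have hsum : ∀ w : Fin k → Bool, ∑ y, (∑ x, paninski k ε w x * W x y) = 1 := by
    intro w
    rw [Finset.sum_comm]
    have : ∀ x : Fin (2 * k), ∑ y, paninski k ε w x * W x y = paninski k ε w x := by
      intro x
      rw [← Finset.mul_sum, (hW x).2, mul_one]
    rw [Finset.sum_congr rfl fun x _ => this x]
    exact paninski_sum hk ε w
  have hsP : ∑ y, P y = 1 := hsum z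
  have hsQ : ∑ y, Q y = 1 := hsum z'
  -- the difference formula
  have hdiff : ∀ y, P y - Q y = 2 * ε * pm (z i) / k * (W (lo i) y - W (hi i) y) := by
    intro y
    have hne : lo i ≠ hi i := by
      intro h
      have := congrArg Fin.val h
      simp [lo, hi] at this
    have h1 : P y - Q y = ∑ x, (paninski k ε z x - paninski k ε z' x) * W x y := by
      rw [← Finset.sum_sub_distrib]
      exact Finset.sum_congr rfl fun x _ => (sub_mul _ _ _).symm
    have h2 : ∑ x, (paninski k ε z x - paninski k ε z' x) * W x y
        = ∑ x ∈ ({lo i, hi i} : Finset (Fin (2 * k))),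
            (paninski k ε z x - paninski k ε z' x) * W x y := by
      refine (Finset.sum_subset (Finset.subset_univ _) ?_).symm
      intro x _ hx
      simp only [Finset.mem_insert, Finset.mem_singleton, not_or] at hx
      rw [hz', paninski_update_eq ε z i (!(z i)) x hx.1 hx.2]
      ring
    rw [h1, h2, Finset.sum_pair hne]
    have hzi' : z' i = !(z i) := by rw [hz']; simp
    rw [paninski_lo, paninski_hi, paninski_lo, paninski_hi, hzi', pm_not]
    field_simp
    ring
  -- termwise chi-square bound
  have hchi : chiSq P Q ≤ 16 * ε ^ 2 / (k : ℝ) * HMat k W i i := by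
    rw [chiSq, HMat, Finset.mul_sum]
    refine Finset.sum_le_sum fun y _ => ?_
    rw [hdiff y]
    rcases eq_or_lt_of_le (hSnn y) with h0 | hpos
    · have hall := hSzero y h0.symm
      simp [hall (lo i), hall (hi i)]
    · have hQp : 0 < Q y := lt_of_lt_of_le (div_pos hpos (by positivity)) (hQge y)
      have hsq : (2 * ε * pm (z i) / k * (W (lo i) y - W (hi i) y)) ^ 2
          = 4 * ε ^ 2 / k ^ 2 * ((W (lo i) y - W (hi i) y) * (W (lo i) y - W (hi i) y)) := by
        have := pm_mul_self (z i)
        cases hb : z i <;> simp [pm] <;> ring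
      rw [hsq]
      have hnum : 0 ≤ 4 * ε ^ 2 / k ^ 2 * ((W (lo i) y - W (hi i) y) * (W (lo i) y - W (hi i) y)) :=
        mul_nonneg (by positivity) (mul_self_nonneg _)
      have h2 : 4 * ε ^ 2 / k ^ 2 * ((W (lo i) y - W (hi i) y) * (W (lo i) y - W (hi i) y)) / Q y
          ≤ 4 * ε ^ 2 / k ^ 2 * ((W (lo i) y - W (hi i) y) * (W (lo i) y - W (hi i) y))
              / ((∑ x, W x y) / (4 * k)) :=
        div_le_div_of_nonneg_left hnum (by positivity) (hQge y)
      refine h2.trans (le_of_eq ?_)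
      have hS : (∑ x, W x y) ≠ 0 := ne_of_gt hpos
      field_simp
      ring
  exact ⟨hchi, le_trans (kl_le_chiSq P Q hPnn (fun y => Finset.sum_nonneg fun x _ => mul_nonneg (paninski_nonneg hk hε hε' z' x) (hWnn x y)) hQzeroP hsP hsQ) hchi⟩


end Paper
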